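/- Let S ⊆ [0,1) be a Lebesgue measurable set and let v₀ : S → [0,1) be a measurable injective map such that for every x ∈ S there exist integers k, l ≥ 0 with v₀(x) = (x + l)/2^k. Then there exist a measurable set S' with S ⊆ S' ⊆ [0,1) and μ([0,1) \ S') = 0, and a measurable injective map ṽ : S' → [0,1) extending v₀ such that for every x ∈ S' there exist integers k, l ≥ 0 with ṽ(x) = (x + l)/2^k. -/

import Mathlib

open MeasureTheory Set Real Filter
open scoped symmDiff Classical

noncomputable section

/-- The Littlewood–Paley set `E = [-2π,-π) ∪ [π,2π)`. -/
def E : Set ℝ := Ico (-(2*π)) (-π) ∪ Ico π (2*π)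

/-- `tau x = x + 2jπ`, where `j` is the unique integer with `x + 2jπ ∈ E`. -/
def tau (x : ℝ) : ℝ :=
  if x - 2*π*(⌊x/(2*π)⌋ : ℝ) < π then x - 2*π*(⌊x/(2*π)⌋ : ℝ) - 2*π
  else x - 2*π*(⌊x/(2*π)⌋ : ℝ)

/-- `delta x = 2^k x`, where (for `x ≠ 0`) `k` is the unique integer with `2^k x ∈ E`. -/
def delta (x : ℝ) : ℝ :=
  if 0 < x then (2:ℝ)^(⌈Real.logb 2 (π/x)⌉) * x
  else (2:ℝ)^(⌊Real.logb 2 (2*π/(-x))⌋) * x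

/-- The map `ξ : E → [0,1)`. -/
def xiMap (x : ℝ) : ℝ := if x < 0 then x/(2*π) + 1 else x/(2*π)

/-- The inverse `ξ⁻¹ : [0,1) → E`. -/
def xiInv (y : ℝ) : ℝ := if y < 1/2 then 2*π*(y-1) else 2*π*y

/-- The translates `{W + 2kπ}_{k ∈ ℤ}` form a partition of `ℝ`. -/
def TransPartition (W : Set ℝ) : Prop :=
  (⋃ k : ℤ, (fun x : ℝ => x + 2*π*(k:ℝ)) '' W) = univ ∧
  Pairwise fun k l : ℤ =>
    Disjoint ((fun x : ℝ => x + 2*π*(k:ℝ)) '' W) ((fun x : ℝ => x + 2*π*(l:ℝ)) '' W)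

/-- The dilates `{2^k W}_{k ∈ ℤ}` form a partition of `ℝ \ {0}`. -/
def DilPartition (W : Set ℝ) : Prop :=
  (⋃ k : ℤ, (fun x : ℝ => (2:ℝ)^k * x) '' W) = {(0:ℝ)}ᶜ ∧
  Pairwise fun k l : ℤ =>
    Disjoint ((fun x : ℝ => (2:ℝ)^k * x) '' W) ((fun x : ℝ => (2:ℝ)^l * x) '' W)

/-- A regularized wavelet set. -/
def IsRegularizedWaveletSet (W : Set ℝ) : Prop :=
  MeasurableSet W ∧ TransPartition W ∧ DilPartition W

/-- The wavelet induced isomorphism `h̃_W = ξ ∘ τ|_W ∘ (δ|_W)⁻¹ ∘ ξ⁻¹` of `[0,1)`. -/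
def hIso (W : Set ℝ) : ℝ → ℝ :=
  fun t => xiMap (tau (Function.invFunOn delta W (xiInv t)))

/-- The class of wavelet induced maps of `[0,1)` (Proposition 2.3 (i)-(ii)). -/
def IsWaveletInduced (h : ℝ → ℝ) : Prop :=
  Set.BijOn h (Ico (0:ℝ) 1) (Ico (0:ℝ) 1) ∧
  Measurable ((Ico (0:ℝ) 1).restrict h) ∧
  ∃ A B : ℤ → Set ℝ,
    (∀ k, MeasurableSet (A k)) ∧ (∀ k, MeasurableSet (B k)) ∧
    (⋃ k, A k) = Ico (1/2 : ℝ) 1 ∧ Pairwise (Function.onFun Disjoint A) ∧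
    (⋃ k, B k) = Ico (0:ℝ) (1/2) ∧ Pairwise (Function.onFun Disjoint B) ∧
    (∀ k, ∀ x ∈ A k, h x = Int.fract ((2:ℝ)^k * x)) ∧
    (∀ k, ∀ x ∈ B k, h x = Int.fract ((2:ℝ)^k * (x - 1)))

/-- The class `WI₁`. -/
def MemWI1 (f : ℝ → ℝ) : Prop :=
  ∃ A B : ℕ → Set ℝ,
    (∀ k, MeasurableSet (A k)) ∧ (∀ k, MeasurableSet (B k)) ∧
    (⋃ k, A k) = Ico (1/2 : ℝ) 1 ∧ Pairwise (Function.onFun Disjoint A) ∧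
    (⋃ k, B k) = Ico (0:ℝ) (1/2) ∧ Pairwise (Function.onFun Disjoint B) ∧
    (∀ k, ∀ x ∈ A k, f x = x / 2^(k+1)) ∧
    (∀ k, ∀ x ∈ B k, f x = (x - 1) / 2^(k+1) + 1)

/-- The class `WI₂`. -/
def MemWI2 (g : ℝ → ℝ) : Prop :=
  Measurable ((Ico (0:ℝ) 1).restrict g) ∧
  Set.MapsTo g (Ico (0:ℝ) 1) (Ico (0:ℝ) 1) ∧
  Set.InjOn g (Ico (0:ℝ) 1) ∧
  ∀ x ∈ Ico (0:ℝ) 1, ∃ k l : ℕ, g x = (x + l) / 2^k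

/-- The Schröder–Cantor–Bernstein map `u ⋄ v` for injections between arbitrary types. -/
def scb {α β : Type*} (u : α → β) (v : β → α) : α → β :=
  fun x =>
    if x ∈ ⋃ k : ℕ, (v ∘ u)^[k] '' (Set.range v)ᶜ then u x
    else if h2 : x ∈ Set.range v then Classical.choose h2
    else u x

/-- The Schröder–Cantor–Bernstein map `u ⋄ v` for maps of `[0,1)`. -/
def scbOn (u v : ℝ → ℝ) : ℝ → ℝ :=
  fun x =>
    if x ∈ ⋃ k : ℕ, (v ∘ u)^[k] '' (Ico (0:ℝ) 1 \ v '' (Ico (0:ℝ) 1)) then u x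
    else Function.invFunOn v (Ico (0:ℝ) 1) x

/-- The metric `d` on wavelet sets. -/
def dws (W₁ W₂ : Set ℝ) : ℝ :=
  Real.sqrt (volume (W₁ ∆ W₂)).toReal + Real.sqrt (∫ x in W₁ ∆ W₂, |x|⁻¹)

/-- The measure `ν` on `[0,1)` with density `(1-x)⁻¹` on `[0,1/2)` and `x⁻¹` on `[1/2,1)`. -/
def nuMeasure : Measure ℝ :=
  volume.withDensity (fun x =>
    ENNReal.ofReal (if x ∈ Ico (0:ℝ) (1/2) then (1-x)⁻¹
      else if x ∈ Ico (1/2:ℝ) 1 then x⁻¹ else 0))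


open scoped ENNReal Topology

namespace WI2Ext

def dy (k l : ℕ) (x : ℝ) : ℝ := (x + l) / 2^k

lemma dy_measurable (k l : ℕ) : Measurable (dy k l) :=
  ((continuous_id.add continuous_const).div_const _).measurable

lemma two_pow_pos (k : ℕ) : (0:ℝ) < 2^k := by positivity

lemma dy_inj (k l : ℕ) : Function.Injective (dy k l) := by
  intro x y h
  have h2 : ((2:ℝ)^k) ≠ 0 := ne_of_gt (two_pow_pos k)
  have := (div_left_inj' h2).mp h
  simpa using this

lemma dy_preimage_volume (k l : ℕ) {C : Set ℝ} (hC : MeasurableSet C) :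
    volume (dy k l ⁻¹' C) = 2^k * volume C := by
  have h2 : ((2:ℝ)^k)⁻¹ ≠ 0 := by positivity
  have hpre : dy k l ⁻¹' C
      = (fun x : ℝ => x + (l:ℝ)) ⁻¹' ((fun x : ℝ => x * ((2:ℝ)^k)⁻¹) ⁻¹' C) := by
    ext x; simp [dy, div_eq_mul_inv]
  rw [hpre, measure_preimage_add_right, Real.volume_preimage_mul_right h2, inv_inv,
    abs_of_pos (two_pow_pos k), ENNReal.ofReal_pow (by norm_num : (0:ℝ) ≤ 2)]
  norm_num

lemma dy_image (k l : ℕ) (A : Set ℝ) :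
    dy k l '' A = (fun y : ℝ => 2^k * y - l) ⁻¹' A := by
  ext y
  constructor
  · rintro ⟨x, hx, rfl⟩
    have : (2:ℝ)^k * ((x + l) / 2^k) - l = x := by field_simp; ring
    simpa [dy, this]
  · intro hy
    exact ⟨2^k * y - l, hy, by rw [dy, sub_add_cancel, mul_div_cancel_left₀ _ (ne_of_gt (two_pow_pos k))]⟩

lemma dy_image_meas (k l : ℕ) {A : Set ℝ} (hA : MeasurableSet A) :
    MeasurableSet (dy k l '' A) := by
  rw [dy_image]
  exact ((measurable_const_mul _).sub measurable_const) hA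

lemma dy_image_volume_le (k l : ℕ) {A : Set ℝ} (hA : MeasurableSet A) :
    volume (dy k l '' A) ≤ volume A := by
  rw [dy_image]
  have hpre : (fun y : ℝ => (2:ℝ)^k * y - l) ⁻¹' A
      = (fun y : ℝ => (2:ℝ)^k * y) ⁻¹' ((fun z : ℝ => z + (-(l:ℝ))) ⁻¹' A) := by
    ext y; simp [sub_eq_add_neg]
  rw [hpre, Real.volume_preimage_mul_left (ne_of_gt (two_pow_pos k)), measure_preimage_add_right]
  calc ENNReal.ofReal |((2:ℝ)^k)⁻¹| * volume A ≤ 1 * volume A := by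
        gcongr
        rw [abs_of_pos (by positivity)]
        apply ENNReal.ofReal_le_one.2
        rw [inv_le_one_iff₀]
        right; exact one_le_pow₀ (by norm_num)
    _ = volume A := one_mul _


lemma exists_dyadic_dense {B : Set ℝ} (hB : MeasurableSet B) (hB1 : B ⊆ Ico (0:ℝ) 1)
    (hpos : 0 < volume B) {ε : ℝ≥0∞} (hε : 0 < ε) :
    ∃ k l : ℕ, l < 2^k ∧
      volume (Ico ((l:ℝ)/2^k) (((l:ℝ)+1)/2^k) \ B) ≤ ε / 2^k := by
  -- small epsilon
  set em : ℝ≥0∞ := min (ε/4) 2⁻¹ with hem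
  have hem0 : 0 < em := lt_min (ENNReal.div_pos (ne_of_gt hε) (by norm_num)) (by norm_num)
  have hem1 : em < 1 := lt_of_le_of_lt (min_le_right _ _) (by norm_num)
  have h1em : (1:ℝ≥0∞) - em < 1 :=
    ENNReal.sub_lt_self ENNReal.one_ne_top one_ne_zero (ne_of_gt hem0)
  -- density point
  have hae := Besicovitch.ae_tendsto_measure_inter_div_of_measurableSet volume hB
  have hx : ∃ x ∈ B, Tendsto (fun r => volume (B ∩ Metric.closedBall x r) /
      volume (Metric.closedBall x r)) (𝓝[>] 0) (𝓝 1) := by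
    by_contra hcon
    push_neg at hcon
    have hsub : B ⊆ {x | ¬ Tendsto (fun r => volume (B ∩ Metric.closedBall x r) /
        volume (Metric.closedBall x r)) (𝓝[>] 0) (𝓝 (B.indicator 1 x))} := by
      intro x hxB
      rw [mem_setOf_eq, indicator_of_mem hxB]
      exact hcon x hxB
    have := measure_mono_null hsub (ae_iff.1 hae)
    exact absurd this (ne_of_gt hpos)
  obtain ⟨x, hxB, hxT⟩ := hx
  have hx01 : x ∈ Ico (0:ℝ) 1 := hB1 hxB
  -- eventually the ratio is large
  have hev : ∀ᶠ r in 𝓝[>] (0:ℝ), 1 - em < volume (B ∩ Metric.closedBall x r) /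
      volume (Metric.closedBall x r) := hxT.eventually (eventually_gt_nhds h1em)
  -- pick r = 2⁻ᵏ
  have hseq : Tendsto (fun k : ℕ => ((2:ℝ)^k)⁻¹) atTop (𝓝[>] 0) := by
    apply tendsto_nhdsWithin_of_tendsto_nhds_of_eventually_within
    · have : Tendsto (fun k : ℕ => ((2:ℝ)⁻¹)^k) atTop (𝓝 0) :=
        tendsto_pow_atTop_nhds_zero_of_lt_one (by norm_num) (by norm_num)
      simpa [inv_pow] using this
    · filter_upwards with k
      exact inv_pos.2 (two_pow_pos k)
  obtain ⟨k, hk⟩ := (hseq.eventually hev).exists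
  set r : ℝ := ((2:ℝ)^k)⁻¹ with hr
  have hr0 : 0 < r := inv_pos.2 (two_pow_pos k)
  -- the dyadic interval containing x
  set l : ℕ := ⌊x * 2^k⌋.toNat with hl
  have hx0 : 0 ≤ x * 2^k := mul_nonneg hx01.1 (le_of_lt (two_pow_pos k))
  have hfl : (l : ℝ) = ⌊x * 2^k⌋ := by
    have h' : (l : ℤ) = ⌊x * 2^k⌋ := Int.toNat_of_nonneg (Int.floor_nonneg.2 hx0)
    exact_mod_cast h'
  have hlx : (l:ℝ) ≤ x * 2^k := by rw [hfl]; exact Int.floor_le _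
  have hxl : x * 2^k < (l:ℝ) + 1 := by rw [hfl]; exact Int.lt_floor_add_one _
  have hlk : l < 2^k := by
    have : (l:ℝ) < 2^k := lt_of_le_of_lt hlx (by
      calc x * 2^k < 1 * 2^k := by
            exact mul_lt_mul_of_pos_right hx01.2 (two_pow_pos k)
        _ = 2^k := one_mul _)
    exact_mod_cast this
  refine ⟨k, l, hlk, ?_⟩
  set I : Set ℝ := Ico ((l:ℝ)/2^k) (((l:ℝ)+1)/2^k) with hI
  -- I ⊆ closedBall x r
  have hxI1 : (l:ℝ)/2^k ≤ x := by
    rw [div_le_iff₀ (two_pow_pos k)]; exact hlx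
  have hxI2 : x < ((l:ℝ)+1)/2^k := by
    rw [lt_div_iff₀ (two_pow_pos k)]; exact hxl
  have hIball : I ⊆ Metric.closedBall x r := by
    have hsplit : ((l:ℝ)+1)/2^k = (l:ℝ)/2^k + r := by
      rw [hr]; field_simp
    intro y hy
    have hy' : y ∈ Ico ((l:ℝ)/2^k) (((l:ℝ)+1)/2^k) := hy
    rw [Real.closedBall_eq_Icc]
    constructor
    · linarith [hy'.1, hxI2]
    · linarith [hy'.2, hxI1]
  -- measure bound
  have hcball : volume (Metric.closedBall x r) = ENNReal.ofReal (2*r) := by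
    rw [Real.volume_closedBall]
  have hcb0 : volume (Metric.closedBall x r) ≠ 0 := by
    rw [hcball]; simp [ENNReal.ofReal_pos]; linarith
  have hcbt : volume (Metric.closedBall x r) ≠ ⊤ := by
    rw [hcball]; exact ENNReal.ofReal_ne_top
  have hineq : (1 - em) * volume (Metric.closedBall x r)
      < volume (B ∩ Metric.closedBall x r) :=
    (ENNReal.lt_div_iff_mul_lt (Or.inl hcb0) (Or.inl hcbt)).1 hk
  have hdiff : volume (I \ B) ≤ em * volume (Metric.closedBall x r) := by
    have h1 : I \ B ⊆ Metric.closedBall x r \ B := diff_subset_diff_left hIball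
    have hseteq : Metric.closedBall x r \ B
        = Metric.closedBall x r \ (B ∩ Metric.closedBall x r) := by
      ext y; simp only [mem_diff, mem_inter_iff]; tauto
    have h2 : volume (Metric.closedBall x r \ B)
        = volume (Metric.closedBall x r) - volume (B ∩ Metric.closedBall x r) := by
      rw [hseteq, measure_diff inter_subset_right
        (hB.inter measurableSet_closedBall).nullMeasurableSet
        (ne_top_of_le_ne_top hcbt (measure_mono inter_subset_right))]
    have hmle : em * volume (Metric.closedBall x r) ≤ volume (Metric.closedBall x r) := by
      calc em * volume (Metric.closedBall x r) ≤ 1 * volume (Metric.closedBall x r) :=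
            mul_le_mul_left hem1.le _
        _ = volume (Metric.closedBall x r) := one_mul _
    calc volume (I \ B) ≤ volume (Metric.closedBall x r \ B) := measure_mono h1
      _ = volume (Metric.closedBall x r) - volume (B ∩ Metric.closedBall x r) := h2
      _ ≤ volume (Metric.closedBall x r) - (1-em) * volume (Metric.closedBall x r) :=
          tsub_le_tsub_left (le_of_lt hineq) _
      _ = em * volume (Metric.closedBall x r) := by
          rw [ENNReal.sub_mul (fun _ _ => hcbt), one_mul, ENNReal.sub_sub_cancel hcbt hmle]
  -- final arithmetic
  have hof : volume (Metric.closedBall x r) = 2 / 2^k := by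
    rw [hcball, hr]
    rw [ENNReal.ofReal_mul (by norm_num)]
    rw [ENNReal.ofReal_inv_of_pos (two_pow_pos k), ENNReal.ofReal_pow (by norm_num : (0:ℝ) ≤ 2)]
    norm_num [ENNReal.div_eq_inv_mul, mul_comm]
  have h42 : (4:ℝ≥0∞)⁻¹ * 2 ≤ 1 := by
    calc (4:ℝ≥0∞)⁻¹ * 2 ≤ 4⁻¹ * 4 := mul_le_mul_right (by norm_num) _
      _ = 1 := ENNReal.inv_mul_cancel (by norm_num) (by norm_num)
  calc volume (I \ B) ≤ em * volume (Metric.closedBall x r) := hdiff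
    _ ≤ (ε/4) * (2/2^k) := by rw [hof]; exact mul_le_mul' (min_le_left _ _) le_rfl
    _ = (4⁻¹ * 2) * (ε * ((2:ℝ≥0∞)^k)⁻¹) := by
        simp only [div_eq_mul_inv]; ring
    _ ≤ 1 * (ε * ((2:ℝ≥0∞)^k)⁻¹) := mul_le_mul_left h42 _
    _ = ε / 2^k := by rw [one_mul, div_eq_mul_inv]
lemma dy_mem_Ico {k l : ℕ} {x : ℝ} (hx : x ∈ Ico (0:ℝ) 1) :
    dy k l x ∈ Ico ((l:ℝ)/2^k) (((l:ℝ)+1)/2^k) := by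
  have h := two_pow_pos k
  constructor
  · show (l:ℝ)/2^k ≤ (x + l)/2^k
    rw [div_le_div_iff_of_pos_right h]
    linarith [hx.1]
  · show (x + l)/2^k < ((l:ℝ)+1)/2^k
    rw [div_lt_div_iff_of_pos_right h]
    linarith [hx.2]

lemma Ico_dyadic_subset {k l : ℕ} (hl : l < 2^k) :
    Ico ((l:ℝ)/2^k) (((l:ℝ)+1)/2^k) ⊆ Ico (0:ℝ) 1 := by
  intro y hy
  constructor
  · exact le_trans (by positivity) hy.1
  · apply lt_of_lt_of_le hy.2
    rw [div_le_one (two_pow_pos k)]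
    have : (l:ℝ) + 1 ≤ (2:ℝ)^k := by
      have : (l+1 : ℕ) ≤ 2^k := hl
      exact_mod_cast this
    exact this

/-- The property of a selected piece. -/
def PickProp (T U : Set ℝ) (p : Set ℝ × ℕ × ℕ) : Prop :=
  MeasurableSet p.1 ∧ p.1 ⊆ T ∧ (∀ x ∈ p.1, dy p.2.1 p.2.2 x ∈ U) ∧
    volume (T \ p.1) ≤ volume T / 2

lemma exists_pick {T U : Set ℝ} (hT : MeasurableSet T) (hT1 : T ⊆ Ico (0:ℝ) 1)
    (hU : MeasurableSet U) (hU1 : U ⊆ Ico (0:ℝ) 1) (hle : volume T ≤ volume U) :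
    ∃ p, PickProp T U p := by
  rcases eq_or_ne (volume T) 0 with h0 | h0
  · exact ⟨(∅, 0, 0), MeasurableSet.empty, empty_subset _, by simp, by simp [h0]⟩
  · have hposT : 0 < volume T := pos_iff_ne_zero.2 h0
    have hposU : 0 < volume U := lt_of_lt_of_le hposT hle
    have hε : 0 < volume T / 2 := ENNReal.div_pos h0 (by norm_num)
    obtain ⟨k, l, hl, hIU⟩ := exists_dyadic_dense hU hU1 hposU hε
    refine ⟨(T ∩ dy k l ⁻¹' U, k, l), hT.inter ((dy_measurable k l) hU),
      inter_subset_left, fun x hx => hx.2, ?_⟩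
    have hsub : T \ (T ∩ dy k l ⁻¹' U)
        ⊆ dy k l ⁻¹' (Ico ((l:ℝ)/2^k) (((l:ℝ)+1)/2^k) \ U) := by
      rintro x ⟨hxT, hxn⟩
      refine ⟨dy_mem_Ico (hT1 hxT), ?_⟩
      intro hxU
      exact hxn ⟨hxT, hxU⟩
    calc volume (T \ (T ∩ dy k l ⁻¹' U))
        ≤ volume (dy k l ⁻¹' (Ico ((l:ℝ)/2^k) (((l:ℝ)+1)/2^k) \ U)) := measure_mono hsub
      _ = 2^k * volume (Ico ((l:ℝ)/2^k) (((l:ℝ)+1)/2^k) \ U) :=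
          dy_preimage_volume k l (measurableSet_Ico.diff hU)
      _ ≤ 2^k * (volume T / 2 / 2^k) := mul_le_mul_right hIU _
      _ = volume T / 2 := ENNReal.mul_div_cancel (by positivity) (by simp)

/-- Choose a piece. -/
def pickExt (T U : Set ℝ) : Set ℝ × ℕ × ℕ :=
  if h : ∃ p, PickProp T U p then h.choose else (∅, 0, 0)

lemma pickExt_spec {T U : Set ℝ} (h : ∃ p, PickProp T U p) :
    PickProp T U (pickExt T U) := by
  rw [pickExt, dif_pos h]; exact h.choose_spec

/-- The exhaustion sequence. -/
def extSeq (T₀ U₀ : Set ℝ) : ℕ → Set ℝ × Set ℝ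
  | 0 => (T₀, U₀)
  | n+1 =>
    let TU := extSeq T₀ U₀ n
    let p := pickExt TU.1 TU.2
    (TU.1 \ p.1, TU.2 \ dy p.2.1 p.2.2 '' p.1)


lemma volume_Ico01_ne_top : volume (Ico (0:ℝ) 1) ≠ ⊤ := by
  simp [Real.volume_Ico]

lemma extSeq_inv (T₀ U₀ : Set ℝ) (hT : MeasurableSet T₀) (hT1 : T₀ ⊆ Ico (0:ℝ) 1)
    (hU : MeasurableSet U₀) (hU1 : U₀ ⊆ Ico (0:ℝ) 1) (hle : volume T₀ ≤ volume U₀) :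
    ∀ n : ℕ, MeasurableSet (extSeq T₀ U₀ n).1 ∧ (extSeq T₀ U₀ n).1 ⊆ T₀ ∧
      MeasurableSet (extSeq T₀ U₀ n).2 ∧ (extSeq T₀ U₀ n).2 ⊆ U₀ ∧
      volume (extSeq T₀ U₀ n).1 ≤ volume (extSeq T₀ U₀ n).2 ∧
      PickProp (extSeq T₀ U₀ n).1 (extSeq T₀ U₀ n).2
        (pickExt (extSeq T₀ U₀ n).1 (extSeq T₀ U₀ n).2) := by
  intro n
  induction n with
  | zero =>
    exact ⟨hT, subset_rfl, hU, subset_rfl, hle, pickExt_spec (exists_pick hT hT1 hU hU1 hle)⟩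
  | succ n ih =>
    obtain ⟨m1, s1, m2, s2, le, pp⟩ := ih
    obtain ⟨pm, ps, pim, pvol⟩ := pp
    set Tn := (extSeq T₀ U₀ n).1
    set Un := (extSeq T₀ U₀ n).2
    set p := pickExt Tn Un
    have hstep : extSeq T₀ U₀ (n+1) = (Tn \ p.1, Un \ dy p.2.1 p.2.2 '' p.1) := rfl
    have hm1' : MeasurableSet (Tn \ p.1) := m1.diff pm
    have hs1' : Tn \ p.1 ⊆ T₀ := diff_subset.trans s1
    have hm2' : MeasurableSet (Un \ dy p.2.1 p.2.2 '' p.1) := m2.diff (dy_image_meas _ _ pm)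
    have hs2' : Un \ dy p.2.1 p.2.2 '' p.1 ⊆ U₀ := diff_subset.trans s2
    have hAfin : volume p.1 ≠ ⊤ :=
      ne_top_of_le_ne_top volume_Ico01_ne_top (measure_mono ((ps.trans s1).trans hT1))
    have hIfin : volume (dy p.2.1 p.2.2 '' p.1) ≠ ⊤ :=
      ne_top_of_le_ne_top hAfin (dy_image_volume_le _ _ pm)
    have hIsub : dy p.2.1 p.2.2 '' p.1 ⊆ Un := image_subset_iff.2 pim
    have hle' : volume (Tn \ p.1) ≤ volume (Un \ dy p.2.1 p.2.2 '' p.1) := by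
      rw [measure_diff ps pm.nullMeasurableSet hAfin,
        measure_diff hIsub (dy_image_meas _ _ pm).nullMeasurableSet hIfin]
      exact tsub_le_tsub le (dy_image_volume_le _ _ pm)
    rw [hstep]
    exact ⟨hm1', hs1', hm2', hs2', hle',
      pickExt_spec (exists_pick hm1' (hs1'.trans hT1) hm2' (hs2'.trans hU1) hle')⟩

lemma extSeq_decay (T₀ U₀ : Set ℝ) (hT : MeasurableSet T₀) (hT1 : T₀ ⊆ Ico (0:ℝ) 1)
    (hU : MeasurableSet U₀) (hU1 : U₀ ⊆ Ico (0:ℝ) 1) (hle : volume T₀ ≤ volume U₀) :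
    ∀ n : ℕ, volume (extSeq T₀ U₀ n).1 ≤ volume T₀ * 2⁻¹^n := by
  intro n
  induction n with
  | zero => simp [extSeq]
  | succ n ih =>
    have pp := (extSeq_inv T₀ U₀ hT hT1 hU hU1 hle n).2.2.2.2.2
    have hstep : (extSeq T₀ U₀ (n+1)).1
        = (extSeq T₀ U₀ n).1 \ (pickExt (extSeq T₀ U₀ n).1 (extSeq T₀ U₀ n).2).1 := rfl
    calc volume (extSeq T₀ U₀ (n+1)).1 ≤ volume (extSeq T₀ U₀ n).1 / 2 := by
          rw [hstep]; exact pp.2.2.2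
      _ = volume (extSeq T₀ U₀ n).1 * 2⁻¹ := by rw [div_eq_mul_inv]
      _ ≤ (volume T₀ * 2⁻¹^n) * 2⁻¹ := mul_le_mul_left ih _
      _ = volume T₀ * 2⁻¹^(n+1) := by rw [pow_succ, mul_assoc]

lemma extSeq_antitone (T₀ U₀ : Set ℝ) :
    ∀ m n : ℕ, m ≤ n → (extSeq T₀ U₀ n).1 ⊆ (extSeq T₀ U₀ m).1 ∧
      (extSeq T₀ U₀ n).2 ⊆ (extSeq T₀ U₀ m).2 := by
  intro m n hmn
  induction n with
  | zero => rw [Nat.le_zero.1 hmn]; exact ⟨subset_rfl, subset_rfl⟩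
  | succ n ih =>
    rcases Nat.lt_or_ge m (n+1) with h | h
    · have := ih (Nat.lt_succ_iff.1 h)
      exact ⟨(diff_subset).trans this.1, (diff_subset).trans this.2⟩
    · have : m = n + 1 := le_antisymm hmn h
      rw [this]; exact ⟨subset_rfl, subset_rfl⟩

lemma meas_graph {S : Set ℝ} (hS : MeasurableSet S) {v : ℝ → ℝ}
    (hv : Measurable (S.restrict v)) (k l : ℕ) :
    MeasurableSet {x | x ∈ S ∧ v x = dy k l x} := by
  have h1 : Measurable (fun p : S => v ↑p - dy k l ↑p) :=
    hv.sub ((dy_measurable k l).comp measurable_subtype_coe)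
  have h2 : MeasurableSet ((fun p : S => v ↑p - dy k l ↑p) ⁻¹' {0}) :=
    h1 (measurableSet_singleton 0)
  have h3 := hS.subtype_image h2
  have heq : Subtype.val '' ((fun p : S => v ↑p - dy k l ↑p) ⁻¹' {0})
      = {x | x ∈ S ∧ v x = dy k l x} := by
    ext x
    constructor
    · rintro ⟨⟨y, hy⟩, hmem, rfl⟩
      exact ⟨hy, sub_eq_zero.1 hmem⟩
    · rintro ⟨hxS, hxv⟩
      exact ⟨⟨x, hxS⟩, by simpa [sub_eq_zero] using hxv, rfl⟩
  rwa [heq] at h3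

lemma meas_pre {S : Set ℝ} (hS : MeasurableSet S) {v : ℝ → ℝ}
    (hv : Measurable (S.restrict v)) {E : Set ℝ} (hE : MeasurableSet E) :
    MeasurableSet {x | x ∈ S ∧ v x ∈ E} := by
  have h2 : MeasurableSet ((S.restrict v) ⁻¹' E) := hv hE
  have h3 := hS.subtype_image h2
  have heq : Subtype.val '' ((S.restrict v) ⁻¹' E) = {x | x ∈ S ∧ v x ∈ E} := by
    ext x
    constructor
    · rintro ⟨⟨y, hy⟩, hmem, rfl⟩
      exact ⟨hy, hmem⟩
    · rintro ⟨hxS, hxv⟩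
      exact ⟨⟨x, hxS⟩, hxv, rfl⟩
  rwa [heq] at h3


end WI2Ext

/-- A partial map of `WI₂` type, defined on a measurable `S ⊆ [0,1)`, extends
to a map of `WI₂` type defined on a measurable `S' ⊇ S` with `μ([0,1) \ S') = 0`. -/
theorem exists_WI2_extension (S : Set ℝ) (hS : MeasurableSet S) (hS1 : S ⊆ Ico (0:ℝ) 1)
    (v₀ : ℝ → ℝ) (hmeas : Measurable (S.restrict v₀)) (hinj : Set.InjOn v₀ S)
    (hmaps : Set.MapsTo v₀ S (Ico (0:ℝ) 1))
    (hform : ∀ x ∈ S, ∃ k l : ℕ, v₀ x = (x + l) / 2^k) :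
    ∃ (S' : Set ℝ) (vtilde : ℝ → ℝ),
      S ⊆ S' ∧ S' ⊆ Ico (0:ℝ) 1 ∧ MeasurableSet S' ∧
      volume (Ico (0:ℝ) 1 \ S') = 0 ∧
      Set.EqOn vtilde v₀ S ∧
      Measurable (S'.restrict vtilde) ∧ Set.InjOn vtilde S' ∧
      Set.MapsTo vtilde S' (Ico (0:ℝ) 1) ∧
      (∀ x ∈ S', ∃ k l : ℕ, vtilde x = (x + l) / 2^k) := by
  classical
  -- decompose S according to the dyadic form of v₀
  set f : ℕ → Set ℝ := fun n =>
    {x | x ∈ S ∧ v₀ x = WI2Ext.dy (Nat.unpair n).1 (Nat.unpair n).2 x} with hf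
  have hfmeas : ∀ n, MeasurableSet (f n) := fun n => WI2Ext.meas_graph hS hmeas _ _
  have hfU : (⋃ n, f n) = S := by
    apply Subset.antisymm
    · exact iUnion_subset fun n x hx => hx.1
    · intro x hx
      obtain ⟨k, l, hkl⟩ := hform x hx
      exact mem_iUnion.2 ⟨Nat.pair k l, hx, by simpa [Nat.unpair_pair, WI2Ext.dy] using hkl⟩
  set D : ℕ → Set ℝ := disjointed f with hDdef
  have hDmeas : ∀ n, MeasurableSet (D n) := MeasurableSet.disjointed hfmeas
  have hDdisj : Pairwise (Function.onFun Disjoint D) := disjoint_disjointed f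
  have hDsub : ∀ n, D n ⊆ f n := fun n => disjointed_subset f n
  set ES : Set ℝ := ⋃ n, WI2Ext.dy (Nat.unpair n).1 (Nat.unpair n).2 '' D n with hESdef
  have hESeq : ES = v₀ '' S := by
    apply Subset.antisymm
    · intro y hy
      obtain ⟨n, hyn⟩ := mem_iUnion.1 hy
      obtain ⟨x, hxD, rfl⟩ := hyn
      have hxf := hDsub n hxD
      exact ⟨x, hxf.1, hxf.2⟩
    · rintro y ⟨x, hxS, rfl⟩
      have hxD : x ∈ ⋃ n, D n := by
        rw [hDdef, iUnion_disjointed, hfU]; exact hxS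
      obtain ⟨n, hxD⟩ := mem_iUnion.1 hxD
      have hxf := hDsub n hxD
      exact mem_iUnion.2 ⟨n, ⟨x, hxD, hxf.2.symm⟩⟩
  have hESmeas : MeasurableSet ES :=
    MeasurableSet.iUnion fun n => WI2Ext.dy_image_meas _ _ (hDmeas n)
  have hESsub : ES ⊆ Ico (0:ℝ) 1 := by
    rw [hESeq]; exact hmaps.image_subset
  have hESvol : volume ES ≤ volume S := by
    calc volume ES ≤ ∑' n, volume (WI2Ext.dy (Nat.unpair n).1 (Nat.unpair n).2 '' D n) :=
          measure_iUnion_le _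
      _ ≤ ∑' n, volume (D n) :=
          ENNReal.tsum_le_tsum fun n => WI2Ext.dy_image_volume_le _ _ (hDmeas n)
      _ = volume (⋃ n, D n) := (measure_iUnion hDdisj hDmeas).symm
      _ = volume S := by rw [hDdef, iUnion_disjointed, hfU]
  -- the exhaustion data
  set T₀ : Set ℝ := Ico (0:ℝ) 1 \ S with hT0def
  set U₀ : Set ℝ := Ico (0:ℝ) 1 \ ES with hU0def
  have hT0m : MeasurableSet T₀ := measurableSet_Ico.diff hS
  have hU0m : MeasurableSet U₀ := measurableSet_Ico.diff hESmeas
  have hT0s : T₀ ⊆ Ico (0:ℝ) 1 := diff_subset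
  have hU0s : U₀ ⊆ Ico (0:ℝ) 1 := diff_subset
  have hSfin : volume S ≠ ⊤ :=
    ne_top_of_le_ne_top WI2Ext.volume_Ico01_ne_top (measure_mono hS1)
  have hESfin : volume ES ≠ ⊤ :=
    ne_top_of_le_ne_top WI2Ext.volume_Ico01_ne_top (measure_mono hESsub)
  have hvol0 : volume T₀ ≤ volume U₀ := by
    rw [hT0def, hU0def, measure_diff hS1 hS.nullMeasurableSet hSfin,
      measure_diff hESsub hESmeas.nullMeasurableSet hESfin]
    exact tsub_le_tsub_left hESvol _
  have hinv := WI2Ext.extSeq_inv T₀ U₀ hT0m hT0s hU0m hU0s hvol0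
  have hdecay := WI2Ext.extSeq_decay T₀ U₀ hT0m hT0s hU0m hU0s hvol0
  have hanti := WI2Ext.extSeq_antitone T₀ U₀
  set TT : ℕ → Set ℝ := fun n => (WI2Ext.extSeq T₀ U₀ n).1 with hTT
  set UU : ℕ → Set ℝ := fun n => (WI2Ext.extSeq T₀ U₀ n).2 with hUU
  set AA : ℕ → Set ℝ := fun n => (WI2Ext.pickExt (TT n) (UU n)).1 with hAA
  set kk : ℕ → ℕ := fun n => (WI2Ext.pickExt (TT n) (UU n)).2.1 with hkk
  set ll : ℕ → ℕ := fun n => (WI2Ext.pickExt (TT n) (UU n)).2.2 with hll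
  have hpp : ∀ n, WI2Ext.PickProp (TT n) (UU n) (WI2Ext.pickExt (TT n) (UU n)) :=
    fun n => (hinv n).2.2.2.2.2
  have hAm : ∀ n, MeasurableSet (AA n) := fun n => (hpp n).1
  have hAsub : ∀ n, AA n ⊆ TT n := fun n => (hpp n).2.1
  have hAim : ∀ n, ∀ x ∈ AA n, WI2Ext.dy (kk n) (ll n) x ∈ UU n := fun n => (hpp n).2.2.1
  have hTsub : ∀ n, TT n ⊆ T₀ := fun n => (hinv n).2.1
  have hUsub : ∀ n, UU n ⊆ U₀ := fun n => (hinv n).2.2.2.1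
  have hstepT : ∀ n, TT (n+1) = TT n \ AA n := fun n => rfl
  have hstepU : ∀ n, UU (n+1) = UU n \ WI2Ext.dy (kk n) (ll n) '' AA n := fun n => rfl
  -- disjointness facts
  have hAdisj : ∀ m n, m < n → ∀ x, x ∈ AA m → x ∈ AA n → False := by
    intro m n hmn x hxm hxn
    have h1 : TT n ⊆ TT (m+1) := (hanti (m+1) n hmn).1
    have h2 : x ∈ TT m \ AA m := by rw [← hstepT m]; exact h1 (hAsub n hxn)
    exact h2.2 hxm
  have hImdisj : ∀ m n, m < n → ∀ y, y ∈ WI2Ext.dy (kk m) (ll m) '' AA m → y ∈ UU n → False := by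
    intro m n hmn y hym hyn
    have h1 : UU n ⊆ UU (m+1) := (hanti (m+1) n hmn).2
    have h2 : y ∈ UU m \ WI2Ext.dy (kk m) (ll m) '' AA m := by rw [← hstepU m]; exact h1 hyn
    exact h2.2 hym
  have hAnotS : ∀ n, ∀ x ∈ AA n, x ∉ S := fun n x hx => (hTsub n (hAsub n hx)).2
  -- the extension
  set S' : Set ℝ := S ∪ ⋃ n, AA n with hS'def
  set vtilde : ℝ → ℝ := fun x =>
    if x ∈ S then v₀ x
    else if h : ∃ n, x ∈ AA n then WI2Ext.dy (kk (Nat.find h)) (ll (Nat.find h)) x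
    else 0 with hvdef
  have hvS : ∀ x ∈ S, vtilde x = v₀ x := fun x hx => by
    rw [hvdef]; simp only [if_pos hx]
  have hvA : ∀ n, ∀ x ∈ AA n, vtilde x = WI2Ext.dy (kk n) (ll n) x := by
    intro n x hx
    have hex : ∃ m, x ∈ AA m := ⟨n, hx⟩
    have hfind := Nat.find_spec hex
    have heq : Nat.find hex = n := by
      rcases lt_trichotomy (Nat.find hex) n with h | h | h
      · exact absurd (hAdisj _ _ h x hfind hx) id
      · exact h
      · exact absurd (hAdisj _ _ h x hx hfind) id
    rw [hvdef]
    simp only [if_neg (hAnotS n x hx), dif_pos hex, heq]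
  -- basic inclusions
  have hSS' : S ⊆ S' := subset_union_left
  have hS'sub : S' ⊆ Ico (0:ℝ) 1 := by
    apply union_subset hS1
    exact iUnion_subset fun n => ((hAsub n).trans (hTsub n)).trans diff_subset
  have hS'm : MeasurableSet S' := hS.union (MeasurableSet.iUnion hAm)
  -- the leftover is null
  have hres : ∀ n, (Ico (0:ℝ) 1 \ S') ⊆ TT n := by
    intro n
    induction n with
    | zero =>
      intro x hx
      exact ⟨hx.1, fun h => hx.2 (mem_union_left _ h)⟩
    | succ n ih =>
      intro x hx
      rw [hstepT n]
      exact ⟨ih hx, fun h => hx.2 (mem_union_right _ (mem_iUnion.2 ⟨n, h⟩))⟩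
  have hT0fin : volume T₀ ≠ ⊤ :=
    ne_top_of_le_ne_top WI2Ext.volume_Ico01_ne_top (measure_mono hT0s)
  have hnull : volume (Ico (0:ℝ) 1 \ S') = 0 := by
    have hle' : ∀ n : ℕ, volume (Ico (0:ℝ) 1 \ S') ≤ volume T₀ * 2⁻¹^n :=
      fun n => (measure_mono (hres n)).trans (hdecay n)
    have h2 : Tendsto (fun n : ℕ => (2⁻¹:ℝ≥0∞)^n) atTop (𝓝 0) :=
      ENNReal.tendsto_pow_atTop_nhds_zero_of_lt_one (by norm_num)
    have htend : Tendsto (fun n : ℕ => volume T₀ * 2⁻¹^n) atTop (𝓝 0) := by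
      have := ENNReal.Tendsto.const_mul h2 (Or.inr hT0fin)
      simpa using this
    exact le_antisymm (ge_of_tendsto' htend hle') zero_le
  -- measurability of the restriction
  have hkey : ∀ E : Set ℝ, MeasurableSet E → MeasurableSet (S' ∩ vtilde ⁻¹' E) := by
    intro E hE
    have heq : S' ∩ vtilde ⁻¹' E
        = {x | x ∈ S ∧ v₀ x ∈ E} ∪ ⋃ n, AA n ∩ WI2Ext.dy (kk n) (ll n) ⁻¹' E := by
      ext x
      simp only [mem_inter_iff, mem_union, mem_iUnion, mem_setOf_eq, mem_preimage]
      constructor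
      · rintro ⟨hxS', hxE⟩
        rcases hxS' with hxS | hxA
        · exact Or.inl ⟨hxS, by rwa [hvS x hxS] at hxE⟩
        · obtain ⟨n, hn⟩ := mem_iUnion.1 hxA
          exact Or.inr ⟨n, hn, by rwa [hvA n x hn] at hxE⟩
      · rintro (⟨hxS, hxE⟩ | ⟨n, hxA, hxE⟩)
        · exact ⟨Or.inl hxS, by rwa [hvS x hxS]⟩
        · exact ⟨Or.inr (mem_iUnion.2 ⟨n, hxA⟩), by rwa [hvA n x hxA]⟩
    rw [heq]
    exact (WI2Ext.meas_pre hS hmeas hE).union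
      (MeasurableSet.iUnion fun n => (hAm n).inter ((WI2Ext.dy_measurable _ _) hE))
  have hrestrict : Measurable (S'.restrict vtilde) := by
    intro E hE
    have heq : S'.restrict vtilde ⁻¹' E = Subtype.val ⁻¹' (S' ∩ vtilde ⁻¹' E) := by
      ext ⟨x, hx⟩
      simp [Set.restrict_apply, hx]; exact Iff.rfl
    rw [heq]
    exact measurable_subtype_coe (hkey E hE)
  -- value locations
  have hvalS : ∀ x ∈ S, vtilde x ∈ v₀ '' S := fun x hx => by
    rw [hvS x hx]; exact mem_image_of_mem _ hx
  have hvalA : ∀ n, ∀ x ∈ AA n, vtilde x ∈ UU n := fun n x hx => by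
    rw [hvA n x hx]; exact hAim n x hx
  have hU0notES : ∀ y ∈ U₀, y ∉ v₀ '' S := by
    intro y hy
    rw [← hESeq]
    exact hy.2
  -- injectivity
  have hinj' : Set.InjOn vtilde S' := by
    intro x hx y hy hxy
    rcases (mem_union _ _ _).1 hx with hxS | hxA
    · rcases (mem_union _ _ _).1 hy with hyS | hyA
      · apply hinj hxS hyS
        rwa [hvS x hxS, hvS y hyS] at hxy
      · obtain ⟨n, hyn⟩ := mem_iUnion.1 hyA
        have h1 : vtilde x ∈ v₀ '' S := hvalS x hxS
        have h2 : vtilde y ∈ U₀ := hUsub n (hvalA n y hyn)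
        rw [hxy] at h1
        exact absurd h1 (hU0notES _ h2)
    · rcases (mem_union _ _ _).1 hy with hyS | hyA
      · obtain ⟨n, hxn⟩ := mem_iUnion.1 hxA
        have h1 : vtilde y ∈ v₀ '' S := hvalS y hyS
        have h2 : vtilde x ∈ U₀ := hUsub n (hvalA n x hxn)
        rw [← hxy] at h1
        exact absurd h1 (hU0notES _ h2)
      · obtain ⟨n, hxn⟩ := mem_iUnion.1 hxA
        obtain ⟨m, hym⟩ := mem_iUnion.1 hyA
        rcases lt_trichotomy n m with h | h | h
        · exfalso
          apply hImdisj n m h (vtilde x)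
          · rw [hvA n x hxn]; exact mem_image_of_mem _ hxn
          · rw [hxy]; exact hvalA m y hym
        · subst h
          apply WI2Ext.dy_inj (kk n) (ll n)
          rwa [hvA n x hxn, hvA n y hym] at hxy
        · exfalso
          apply hImdisj m n h (vtilde y)
          · rw [hvA m y hym]; exact mem_image_of_mem _ hym
          · rw [← hxy]; exact hvalA n x hxn
  -- maps to
  have hmaps' : Set.MapsTo vtilde S' (Ico (0:ℝ) 1) := by
    intro x hx
    rcases (mem_union _ _ _).1 hx with hxS | hxA
    · rw [hvS x hxS]; exact hmaps hxS
    · obtain ⟨n, hxn⟩ := mem_iUnion.1 hxA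
      exact hU0s (hUsub n (hvalA n x hxn))
  -- form
  have hform' : ∀ x ∈ S', ∃ k l : ℕ, vtilde x = (x + l) / 2^k := by
    intro x hx
    rcases (mem_union _ _ _).1 hx with hxS | hxA
    · obtain ⟨k, l, hkl⟩ := hform x hxS
      exact ⟨k, l, by rw [hvS x hxS]; exact hkl⟩
    · obtain ⟨n, hxn⟩ := mem_iUnion.1 hxA
      exact ⟨kk n, ll n, hvA n x hxn⟩
  exact ⟨S', vtilde, hSS', hS'sub, hS'm, hnull, fun x hx => hvS x hx,
    hrestrict, hinj', hmaps', hform'⟩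

end
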